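/- Let ℓ ≤ τ ≤ k be positive integers and let X = ((x_1^1,x_1^2),…,(x_n^1,x_n^2)) be n pairs of nonnegative reals whose 2n entries are pairwise distinct. Let c = (c_1,…,c_n) be uniformly distributed on {1,2}^n; define the sample vector s by s_i = x_i^{c_i} and the award vector v by v_i = x_i^{3−c_i}. Let T be the τ-th largest value among s_1,…,s_n and let S be the set consisting of the first (in the order i = 1,…,n) at most k indices i with v_i > T. Then E_c[TOP_ℓ(S; v)] ≥ (1 − 4ℓ·e^{−(min(k−τ, τ−ℓ))²/(8k)}) · E_c[TOP_ℓ(v)]. -/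

import Mathlib

open Finset

set_option linter.unusedSectionVars false
set_option maxHeartbeats 1000000

section RankAux

variable {α : Type*} [Fintype α] [DecidableEq α]

/-- number of elements with strictly larger `f`-value. -/
noncomputable def rnk (f : α → ℝ) (a : α) : ℕ := #(univ.filter fun b => f a < f b)

lemma rnk_anti {f : α → ℝ} {a b : α} (h : f a < f b) : rnk f b < rnk f a := by
  apply card_lt_card
  constructor
  · intro x hx
    simp only [mem_filter, mem_univ, true_and] at hx ⊢
    linarith
  · intro hsub
    have hb : b ∈ univ.filter fun x => f a < f x := by
      simp only [mem_filter, mem_univ, true_and]; exact h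
    have := hsub hb
    simp only [mem_filter, mem_univ, true_and] at this
    exact lt_irrefl _ this

lemma rnk_inj {f : α → ℝ} (hf : Function.Injective f) : Function.Injective (rnk f) := by
  intro a b h
  rcases lt_trichotomy (f a) (f b) with h' | h' | h'
  · have := rnk_anti h'; omega
  · exact hf h'
  · have := rnk_anti h'; omega

lemma rnk_lt_card (f : α → ℝ) (a : α) : rnk f a < Fintype.card α := by
  have hsub : (univ.filter fun b => f a < f b) ⊆ univ.erase a := by
    intro x hx
    simp only [mem_filter, mem_univ, true_and] at hx
    refine mem_erase.mpr ⟨?_, mem_univ _⟩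
    rintro rfl; exact lt_irrefl _ hx
  have h1 : rnk f a ≤ #(univ.erase a) := card_le_card hsub
  have h2 : #(univ.erase a) = Fintype.card α - 1 := by
    rw [card_erase_of_mem (mem_univ a), card_univ]
  have h3 : 1 ≤ Fintype.card α := Fintype.card_pos_iff.mpr ⟨a⟩
  omega

lemma image_rnk {f : α → ℝ} (hf : Function.Injective f) :
    univ.image (rnk f) = Finset.range (Fintype.card α) := by
  apply eq_of_subset_of_card_le
  · intro x hx
    rcases mem_image.mp hx with ⟨a, _, rfl⟩
    exact mem_range.mpr (rnk_lt_card f a)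
  · rw [card_range, card_image_of_injective _ (rnk_inj hf), card_univ]

lemma card_rnk_lt {f : α → ℝ} (hf : Function.Injective f) (N : ℕ) :
    #(univ.filter fun a => rnk f a < N) = min N (Fintype.card α) := by
  have h1 : ((univ.image (rnk f)).filter fun m => m < N)
      = (univ.filter fun a => rnk f a < N).image (rnk f) := by
    rw [Finset.filter_image]
  have h2 : #((univ.image (rnk f)).filter fun m => m < N)
      = #(univ.filter fun a => rnk f a < N) := by
    rw [h1, card_image_of_injective _ (rnk_inj hf)]
  rw [← h2, image_rnk hf]
  have : (Finset.range (Fintype.card α)).filter (fun m => m < N)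
      = Finset.range (min N (Fintype.card α)) := by
    ext x; simp only [mem_filter, mem_range, lt_min_iff]; omega
  rw [this, card_range]

lemma up_of_rnk_lt {f : α → ℝ} {x : ℝ} {N : ℕ}
    (h : N ≤ #(univ.filter fun a => x < f a)) {a : α} (ha : rnk f a < N) : x < f a := by
  by_contra hle
  push_neg at hle
  have hsub : (univ.filter fun b => x < f b) ⊆ univ.filter fun b => f a < f b := by
    intro b hb
    simp only [mem_filter, mem_univ, true_and] at hb ⊢
    linarith
  have := card_le_card hsub
  have : N ≤ rnk f a := le_trans h this
  omega

lemma rnk_lt_of_up {f : α → ℝ} {x : ℝ} {N : ℕ}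
    (h : #(univ.filter fun a => x < f a) ≤ N) {a : α} (ha : x < f a) : rnk f a < N := by
  have hsub : (univ.filter fun b => f a < f b) ⊆ (univ.filter fun b => x < f b).erase a := by
    intro b hb
    simp only [mem_filter, mem_univ, true_and] at hb
    refine mem_erase.mpr ⟨?_, ?_⟩
    · rintro rfl; exact lt_irrefl _ hb
    · simp only [mem_filter, mem_univ, true_and]; linarith
  have h1 : rnk f a ≤ #((univ.filter fun b => x < f b).erase a) := card_le_card hsub
  have hamem : a ∈ univ.filter fun b => x < f b := by
    simp only [mem_filter, mem_univ, true_and]; exact ha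
  have h2 := card_erase_of_mem hamem
  have h3 : 1 ≤ #(univ.filter fun b => x < f b) := card_pos.mpr ⟨a, hamem⟩
  omega

lemma majorize {f : α → ℝ} (hf : Function.Injective f) (h0 : ∀ a, 0 ≤ f a)
    {ℓ : ℕ} {C : Finset α} (hC : #C ≤ ℓ) :
    ∑ a ∈ C, f a ≤ ∑ a ∈ univ.filter fun a => rnk f a < ℓ, f a := by
  set Tl := univ.filter fun a => rnk f a < ℓ with hTl
  by_cases hsub : C \ Tl = ∅
  · exact sum_le_sum_of_subset_of_nonneg (sdiff_eq_empty_iff_subset.mp hsub)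
      (fun a _ _ => h0 a)
  · obtain ⟨a0, ha0⟩ := nonempty_iff_ne_empty.mpr hsub
    have ha0' : ℓ ≤ rnk f a0 := by
      have := (mem_sdiff.mp ha0).2
      simp only [hTl, mem_filter, mem_univ, true_and, not_lt] at this
      exact this
    have hαℓ : ℓ < Fintype.card α := by
      have := rnk_lt_card f a0; omega
    have hTcard : #Tl = ℓ := by
      rw [hTl, card_rnk_lt hf]; omega
    have key : ∀ a ∈ C \ Tl, ∀ b ∈ Tl, f a < f b := by
      intro a ha b hb
      have h1 : ℓ ≤ rnk f a := by
        have := (mem_sdiff.mp ha).2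
        simp only [hTl, mem_filter, mem_univ, true_and, not_lt] at this
        exact this
      have h2 : rnk f b < ℓ := by
        simp only [hTl, mem_filter, mem_univ, true_and] at hb
        exact hb
      rcases lt_trichotomy (f a) (f b) with h | h | h
      · exact h
      · exact absurd (hf h) (by rintro rfl; omega)
      · have := rnk_anti h; omega
    have hcard2 : #(C \ Tl) ≤ #(Tl \ C) := by
      have e1 : #(C \ Tl) + #(C ∩ Tl) = #C := card_sdiff_add_card_inter C Tl
      have e2 : #(Tl \ C) + #(Tl ∩ C) = #Tl := card_sdiff_add_card_inter Tl C
      have e3 : #(C ∩ Tl) = #(Tl ∩ C) := by rw [inter_comm]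
      omega
    obtain ⟨D, hDsub, hDcard⟩ := Finset.exists_subset_card_eq hcard2
    have hDne : D.Nonempty := by
      rw [← card_pos, hDcard, card_pos, nonempty_iff_ne_empty]
      exact hsub
    have hμne : (D.image f).Nonempty := hDne.image f
    set μ := (D.image f).min' hμne with hμ
    have hμD : ∀ d ∈ D, μ ≤ f d := fun d hd => min'_le _ _ (mem_image_of_mem f hd)
    obtain ⟨d0, hd0D, hd0⟩ := mem_image.mp (min'_mem _ hμne)
    have haμ : ∀ a ∈ C \ Tl, f a ≤ μ := by
      intro a ha
      rw [hμ, ← hd0]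
      exact le_of_lt (key a ha d0 (mem_sdiff.mp (hDsub hd0D)).1)
    have step1 : ∑ a ∈ C \ Tl, f a ≤ #(C \ Tl) • μ := sum_le_card_nsmul _ _ _ haμ
    have step2 : #D • μ ≤ ∑ a ∈ D, f a := card_nsmul_le_sum _ _ _ hμD
    have step3 : ∑ a ∈ D, f a ≤ ∑ a ∈ Tl \ C, f a :=
      sum_le_sum_of_subset_of_nonneg hDsub (fun a _ _ => h0 a)
    have e4 : ∑ a ∈ C ∩ Tl, f a + ∑ a ∈ C \ Tl, f a = ∑ a ∈ C, f a :=
      sum_inter_add_sum_sdiff C Tl f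
    have e5 : ∑ a ∈ Tl ∩ C, f a + ∑ a ∈ Tl \ C, f a = ∑ a ∈ Tl, f a :=
      sum_inter_add_sum_sdiff Tl C f
    have e6 : ∑ a ∈ C ∩ Tl, f a = ∑ a ∈ Tl ∩ C, f a := by rw [inter_comm]
    have hsmul : #(C \ Tl) • μ = #D • μ := by rw [hDcard]
    linarith [step1, step2, step3, hsmul ▸ step1]

end RankAux

section ChernoffAux

lemma sum_pi_bool {n : ℕ} (h : Fin n → Bool → ℝ) :
    ∑ c : Fin n → Bool, ∏ i, h i (c i) = ∏ i, (h i true + h i false) := by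
  rw [show (∏ i, (h i true + h i false)) = ∏ i, ∑ b : Bool, h i b from
    prod_congr rfl fun i _ => by rw [Fintype.sum_bool]]
  rw [Fintype.prod_sum]

lemma count_coord {n : ℕ} (i : Fin n) (b : Bool) :
    ∑ c : Fin n → Bool, (if c i = b then (1:ℝ) else 0) = 2 ^ (n-1) := by
  have key := sum_pi_bool (fun j b' => if j = i then (if b' = b then (1:ℝ) else 0) else 1)
  have lhs : ∀ c : Fin n → Bool,
      (∏ j, (if j = i then (if c j = b then (1:ℝ) else 0) else 1))
        = (if c i = b then (1:ℝ) else 0) := by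
    intro c
    rw [Finset.prod_eq_single i (fun j _ hj => by simp [hj]) (by simp)]
    simp
  have rhs : (∏ j, ((if j = i then (if true = b then (1:ℝ) else 0) else 1)
      + (if j = i then (if false = b then (1:ℝ) else 0) else 1))) = 2 ^ (n-1) := by
    rw [← Finset.mul_prod_erase univ _ (mem_univ i)]
    have h1 : ((if i = i then (if true = b then (1:ℝ) else 0) else 1)
        + (if i = i then (if false = b then (1:ℝ) else 0) else 1)) = 1 := by
      cases b <;> norm_num
    rw [h1, one_mul]
    have h2 : ∀ j ∈ univ.erase i, ((if j = i then (if true = b then (1:ℝ) else 0) else 1)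
        + (if j = i then (if false = b then (1:ℝ) else 0) else 1)) = 2 := by
      intro j hj
      have := (mem_erase.mp hj).1
      simp [this]; norm_num
    rw [Finset.prod_congr rfl h2, Finset.prod_const, card_erase_of_mem (mem_univ i),
      card_univ, Fintype.card_fin]
  calc ∑ c : Fin n → Bool, (if c i = b then (1:ℝ) else 0)
      = ∑ c : Fin n → Bool, ∏ j, (if j = i then (if c j = b then (1:ℝ) else 0) else 1) :=
        (Finset.sum_congr rfl fun c _ => (lhs c).symm)
    _ = 2 ^ (n-1) := by rw [key, rhs]

lemma chernoff {n : ℕ} (I : Finset (Fin n)) (g : Fin n → Bool) (r : ℕ)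
    (hr : 2 * r ≤ #I) :
    ∑ c : Fin n → Bool, (if #(I.filter fun i => c i = g i) ≤ r then (1:ℝ) else 0)
      ≤ 2 ^ n * Real.exp (-((#I:ℝ) - 2*r)^2 / (2 * #I)) := by
  rcases Nat.eq_zero_or_pos #I with hp | hp
  · have hI : I = ∅ := card_eq_zero.mp hp
    have hr0 : r = 0 := by omega
    subst hI hr0
    simp only [Finset.filter_empty, Finset.card_empty, le_refl, if_true, card_empty]
    rw [Finset.sum_const, Finset.card_univ, Fintype.card_fun, Fintype.card_bool,
      Fintype.card_fin]
    norm_num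
  · set p : ℕ := #I with hpdef
    set lam : ℝ := 2 * ((p:ℝ) - 2*r) / p with hlam
    have hppos : (0:ℝ) < p := by exact_mod_cast hp
    have hd0 : (0:ℝ) ≤ (p:ℝ) - 2*r := by
      have : (2*r : ℝ) ≤ p := by exact_mod_cast hr
      linarith
    have hlam0 : 0 ≤ lam := by rw [hlam]; positivity
    have point : ∀ c : Fin n → Bool,
        (if #(I.filter fun i => c i = g i) ≤ r then (1:ℝ) else 0)
          ≤ Real.exp (lam * r) *
            ∏ i, (if i ∈ I then (if c i = g i then Real.exp (-lam) else 1) else 1) := by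
      intro c
      have hprod : (∏ i, (if i ∈ I then (if c i = g i then Real.exp (-lam) else 1) else 1))
          = Real.exp (-lam * #(I.filter fun i => c i = g i)) := by
        rw [← Finset.prod_subset (Finset.subset_univ I)
          (fun x _ hx => by simp [hx])]
        rw [Finset.prod_congr rfl (fun x hx => by simp [hx] :
          ∀ x ∈ I, (if x ∈ I then (if c x = g x then Real.exp (-lam) else 1) else 1)
            = (if c x = g x then Real.exp (-lam) else 1))]
        rw [← Finset.prod_filter_mul_prod_filter_not I (fun x => c x = g x)]
        rw [Finset.prod_congr rfl (fun x hx => if_pos (mem_filter.mp hx).2),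
          Finset.prod_congr rfl (fun x hx => if_neg (mem_filter.mp hx).2),
          Finset.prod_const, Finset.prod_const, one_pow, mul_one,
          ← Real.exp_nat_mul]
        ring_nf
      rw [hprod, ← Real.exp_add]
      by_cases hcase : #(I.filter fun i => c i = g i) ≤ r
      · rw [if_pos hcase]
        apply Real.one_le_exp
        have : (#(I.filter fun i => c i = g i) : ℝ) ≤ r := by exact_mod_cast hcase
        nlinarith
      · rw [if_neg hcase]
        positivity
    have hpn : p ≤ n := by
      have := card_le_card (Finset.subset_univ I)
      rwa [card_univ, Fintype.card_fin] at this
    have prodeval : (∏ i : Fin n, ((if i ∈ I then (if true = g i then Real.exp (-lam) else 1) else 1)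
        + (if i ∈ I then (if false = g i then Real.exp (-lam) else 1) else 1)))
        = (Real.exp (-lam) + 1)^p * 2^(n-p) := by
      have h1 : ∀ i : Fin n, ((if i ∈ I then (if true = g i then Real.exp (-lam) else 1) else 1)
          + (if i ∈ I then (if false = g i then Real.exp (-lam) else 1) else 1))
          = (if i ∈ I then Real.exp (-lam) + 1 else 2) := by
        intro i
        by_cases hi : i ∈ I
        · cases hg : g i <;> simp [hi, hg] <;> ring
        · simp [hi]; norm_num
      rw [Finset.prod_congr rfl (fun i _ => h1 i)]
      rw [← Finset.prod_filter_mul_prod_filter_not univ (fun i => i ∈ I)]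
      rw [Finset.prod_congr rfl (fun x hx => if_pos (mem_filter.mp hx).2),
        Finset.prod_congr rfl (fun x hx => if_neg (mem_filter.mp hx).2),
        Finset.prod_const, Finset.prod_const]
      congr 1
      · congr 1
        rw [Finset.filter_univ_mem]
      · congr 1
        have : (univ.filter fun x => x ∉ I) = Iᶜ := by ext x; simp
        rw [this, Finset.card_compl, Fintype.card_fin]
    have cosh_step : Real.exp (-lam) + 1 ≤ 2 * Real.exp (lam^2/8 - lam/2) := by
      have e1 : Real.exp (-lam) + 1 = 2 * Real.exp (-lam/2) * Real.cosh (lam/2) := by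
        rw [Real.cosh_eq]
        have e2 : Real.exp (-lam/2) * Real.exp (lam/2) = 1 := by
          rw [← Real.exp_add, neg_div, neg_add_cancel, Real.exp_zero]
        have e3 : Real.exp (-lam/2) * Real.exp (-lam/2) = Real.exp (-lam) := by
          rw [← Real.exp_add]; ring_nf
        field_simp
        rw [neg_div] at e2 e3
        nlinarith [e2, e3]
      rw [e1]
      have e4 : Real.cosh (lam/2) ≤ Real.exp ((lam/2)^2/2) := Real.cosh_le_exp_half_sq _
      calc 2 * Real.exp (-lam/2) * Real.cosh (lam/2)
          ≤ 2 * Real.exp (-lam/2) * Real.exp ((lam/2)^2/2) := by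
            apply mul_le_mul_of_nonneg_left e4; positivity
        _ = 2 * Real.exp (lam^2/8 - lam/2) := by
            rw [mul_assoc, ← Real.exp_add]; ring_nf
    have scalar_eq : lam * r + p * (lam^2/8 - lam/2) = -((p:ℝ) - 2*r)^2 / (2*p) := by
      rw [hlam]
      field_simp
      ring
    calc ∑ c : Fin n → Bool, (if #(I.filter fun i => c i = g i) ≤ r then (1:ℝ) else 0)
        ≤ ∑ c : Fin n → Bool, Real.exp (lam * r) *
            ∏ i, (if i ∈ I then (if c i = g i then Real.exp (-lam) else 1) else 1) :=
          Finset.sum_le_sum (fun c _ => point c)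
      _ = Real.exp (lam * r) * ∑ c : Fin n → Bool,
            ∏ i, (if i ∈ I then (if c i = g i then Real.exp (-lam) else 1) else 1) := by
          rw [Finset.mul_sum]
      _ = Real.exp (lam * r) * ((Real.exp (-lam) + 1)^p * 2^(n-p)) := by
          rw [sum_pi_bool (fun i b => if i ∈ I then (if b = g i then Real.exp (-lam) else 1) else 1)]
          rw [prodeval]
      _ ≤ Real.exp (lam * r) * ((2 * Real.exp (lam^2/8 - lam/2))^p * 2^(n-p)) := by
          apply mul_le_mul_of_nonneg_left _ (le_of_lt (Real.exp_pos _))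
          apply mul_le_mul_of_nonneg_right _ (by positivity)
          exact pow_le_pow_left₀ (by positivity) cosh_step p
      _ = 2^n * Real.exp (lam * r + p * (lam^2/8 - lam/2)) := by
          rw [mul_pow, ← Real.exp_nat_mul]
          have : (2:ℝ)^p * 2^(n-p) = 2^n := by
            rw [← pow_add]
            congr 1
            omega
          calc Real.exp (lam * ↑r) * (2 ^ p * Real.exp (↑p * (lam ^ 2 / 8 - lam / 2)) * 2 ^ (n - p))
              = (2:ℝ)^p * 2^(n-p) * (Real.exp (lam * ↑r) * Real.exp (↑p * (lam ^ 2 / 8 - lam / 2))) := by ring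
            _ = 2^n * Real.exp (lam * ↑r + ↑p * (lam ^ 2 / 8 - lam / 2)) := by rw [this, Real.exp_add]
      _ = 2^n * Real.exp (-((p:ℝ) - 2*r)^2 / (2*p)) := by rw [scalar_eq]

end ChernoffAux

section CountAux

variable {n : ℕ}

lemma card_filter_prod (R : Fin n × Bool → Prop) [DecidablePred R] :
    #(univ.filter R)
      = #(univ.filter fun i => R (i,true)) + #(univ.filter fun i => R (i,false)) := by
  rw [Finset.card_filter, Finset.card_filter, Finset.card_filter, Fintype.sum_prod_type,
    ← Finset.sum_add_distrib]
  exact Finset.sum_congr rfl fun i _ => by rw [Fintype.sum_bool]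

variable (P : Finset (Fin n × Bool))

/-- pairs with both sides in `P` -/
def pairsBoth : Finset (Fin n) := univ.filter fun i => ((i,true) ∈ P ∧ (i,false) ∈ P)

/-- pairs with exactly one side in `P` -/
def pairsOne : Finset (Fin n) := univ.filter fun i => (((i,true) ∈ P) ↔ ((i,false) ∉ P))

/-- for a split pair, the coin value making the `P`-side an award -/
def gSide (i : Fin n) : Bool := if (i,true) ∈ P then false else true

lemma split_card : #P = 2 * #(pairsBoth P) + #(pairsOne P) := by
  have h0 : P = univ.filter (fun p => p ∈ P) := by ext p; simp
  have hL : #P = ∑ i : Fin n,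
      ((if (i,true) ∈ P then 1 else 0) + (if (i,false) ∈ P then 1 else 0)) := by
    conv_lhs => rw [h0]
    rw [card_filter_prod, Finset.card_filter, Finset.card_filter, ← Finset.sum_add_distrib]
  rw [hL, pairsBoth, pairsOne, Finset.card_filter, Finset.card_filter, Finset.mul_sum,
    ← Finset.sum_add_distrib]
  refine Finset.sum_congr rfl fun i _ => ?_
  by_cases h1 : (i,true) ∈ P <;> by_cases h2 : (i,false) ∈ P <;> simp [h1, h2]

lemma split_award (c : Fin n → Bool) :
    #(P.filter fun p => p.2 = !(c p.1))
      = #(pairsBoth P) + #((pairsOne P).filter fun i => c i = gSide P i) := by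
  have h0 : P.filter (fun p => p.2 = !(c p.1))
      = univ.filter (fun p : Fin n × Bool => p ∈ P ∧ p.2 = !(c p.1)) := by
    ext p; simp [mem_filter, and_comm]
  have hL : #(P.filter fun p => p.2 = !(c p.1)) = ∑ i : Fin n,
      ((if (i,true) ∈ P ∧ true = !(c i) then 1 else 0)
        + (if (i,false) ∈ P ∧ false = !(c i) then 1 else 0)) := by
    conv_lhs => rw [h0]
    rw [card_filter_prod, Finset.card_filter, Finset.card_filter, ← Finset.sum_add_distrib]
  rw [hL, pairsBoth, pairsOne, Finset.filter_filter, Finset.card_filter, Finset.card_filter,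
    ← Finset.sum_add_distrib]
  refine Finset.sum_congr rfl fun i _ => ?_
  by_cases h1 : (i,true) ∈ P <;> by_cases h2 : (i,false) ∈ P <;> cases hc : c i <;>
    simp [gSide, h1, h2, hc]

lemma split_sample (c : Fin n → Bool) :
    #(P.filter fun p => p.2 = c p.1)
      = #(pairsBoth P) + #((pairsOne P).filter fun i => c i = !(gSide P i)) := by
  have h0 : P.filter (fun p => p.2 = c p.1)
      = univ.filter (fun p : Fin n × Bool => p ∈ P ∧ p.2 = c p.1) := by
    ext p; simp [mem_filter, and_comm]
  have hL : #(P.filter fun p => p.2 = c p.1) = ∑ i : Fin n,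
      ((if (i,true) ∈ P ∧ true = c i then 1 else 0)
        + (if (i,false) ∈ P ∧ false = c i then 1 else 0)) := by
    conv_lhs => rw [h0]
    rw [card_filter_prod, Finset.card_filter, Finset.card_filter, ← Finset.sum_add_distrib]
  rw [hL, pairsBoth, pairsOne, Finset.filter_filter, Finset.card_filter, Finset.card_filter,
    ← Finset.sum_add_distrib]
  refine Finset.sum_congr rfl fun i _ => ?_
  by_cases h1 : (i,true) ∈ P <;> by_cases h2 : (i,false) ∈ P <;> cases hc : c i <;>
    simp [gSide, h1, h2, hc]

end CountAux

section ListAux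

lemma countP_ofFn {m : ℕ} (f : Fin m → ℝ) (Q : ℝ → Prop) [DecidablePred Q] :
    (List.ofFn f).countP (fun x => decide (Q x)) = #(univ.filter fun i => Q (f i)) := by
  induction m with
  | zero => simp
  | succ m ih =>
      rw [List.ofFn_succ, List.countP_cons]
      rw [ih (fun i => f i.succ)]
      rw [Finset.card_filter, Finset.card_filter, Fin.sum_univ_succ]
      by_cases h : Q (f 0) <;> simp [h, add_comm]

end ListAux


/-- `TOPval ℓ A v` is the maximum of `∑ i ∈ B, v i` over `B ⊆ A` with `|B| ≤ ℓ`. -/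
noncomputable def TOPval {n : ℕ} (ℓ : ℕ) (A : Finset (Fin n)) (v : Fin n → ℝ) : ℝ :=
  ((A.powerset.filter fun B => B.card ≤ ℓ).image fun B => ∑ i ∈ B, v i).max'
    (Finset.Nonempty.image
      ⟨∅, Finset.mem_filter.mpr ⟨Finset.empty_mem_powerset A, by simp⟩⟩ _)

/-- The `t`-th largest entry of `w` (1-indexed); `0` if out of range. -/
noncomputable def kthLargest {n : ℕ} (w : Fin n → ℝ) (t : ℕ) : ℝ :=
  ((List.ofFn w).insertionSort (· ≥ ·)).getD (t - 1) 0

/-- The set of the first (at most) `k` indices `i` (in increasing order) with `v i > T`. -/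
noncomputable def acceptSet {n : ℕ} (k : ℕ) (T : ℝ) (v : Fin n → ℝ) : Finset (Fin n) :=
  Finset.univ.filter fun i =>
    T < v i ∧ (Finset.univ.filter fun j => j < i ∧ T < v j).card < k

/-- The sample vector determined by the pairs `X` and the coin flips `c`. -/
def sampleVec {n : ℕ} (X : Fin n → ℝ × ℝ) (c : Fin n → Bool) (i : Fin n) : ℝ :=
  if c i then (X i).1 else (X i).2

/-- The award vector determined by the pairs `X` and the coin flips `c`
(the entry of each pair not used as a sample). -/
def awardVec {n : ℕ} (X : Fin n → ℝ × ℝ) (c : Fin n → Bool) (i : Fin n) : ℝ :=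
  if c i then (X i).2 else (X i).1

lemma countP_ofFn' {m : ℕ} (f : Fin m → ℝ) (Q : ℝ → Prop) [DecidablePred Q] :
    (List.ofFn f).countP (fun x => decide (Q x)) = #(univ.filter fun i => Q (f i)) := by
  induction m with
  | zero => simp
  | succ m ih =>
      rw [List.ofFn_succ, List.countP_cons, ih (fun i => f i.succ),
        Finset.card_filter, Finset.card_filter, Fin.sum_univ_succ]
      by_cases h : Q (f 0) <;> simp [h, add_comm]

section TOP

variable {n : ℕ} {ℓ : ℕ} {A B : Finset (Fin n)} {v : Fin n → ℝ} {M : ℝ}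

lemma TOPval_nonneg (ℓ : ℕ) (A : Finset (Fin n)) (v : Fin n → ℝ) : 0 ≤ TOPval ℓ A v := by
  apply Finset.le_max'
  exact mem_image.mpr ⟨∅, mem_filter.mpr ⟨empty_mem_powerset A, by simp⟩, by simp⟩

lemma le_TOPval (hBA : B ⊆ A) (hB : #B ≤ ℓ) : ∑ i ∈ B, v i ≤ TOPval ℓ A v := by
  apply Finset.le_max'
  exact mem_image_of_mem _ (mem_filter.mpr ⟨mem_powerset.mpr hBA, hB⟩)

lemma TOPval_le (h : ∀ B, B ⊆ A → #B ≤ ℓ → ∑ i ∈ B, v i ≤ M) : TOPval ℓ A v ≤ M := by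
  apply Finset.max'_le
  intro y hy
  obtain ⟨B, hB, rfl⟩ := mem_image.mp hy
  exact h B (mem_powerset.mp (mem_filter.mp hB).1) (mem_filter.mp hB).2

end TOP

lemma kth_facts {n : ℕ} (s : Fin n → ℝ) (hs : Function.Injective s) (t : ℕ)
    (ht1 : 1 ≤ t) (htn : t ≤ n) :
    (∃ j, s j = kthLargest s t) ∧
    #(univ.filter fun j => kthLargest s t < s j) = t - 1 ∧
    t ≤ #(univ.filter fun j => kthLargest s t ≤ s j) := by
  classical
  set L : List ℝ := (List.ofFn s).insertionSort (· ≥ ·) with hL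
  have hlen : L.length = n := by rw [hL, List.length_insertionSort, List.length_ofFn]
  have hsorted : L.Pairwise (· ≥ ·) := List.pairwise_insertionSort _ _
  have hperm : L.Perm (List.ofFn s) := List.perm_insertionSort _ _
  have hnodup : L.Nodup := hperm.nodup_iff.mpr ((List.nodup_ofFn).mpr hs)
  have hidx : t - 1 < L.length := by omega
  have hT : kthLargest s t = L.get ⟨t-1, hidx⟩ := by
    rw [kthLargest, ← hL, List.getD_eq_getElem L 0 hidx]
    rfl
  have hanti : ∀ a b : Fin L.length, a < b → L.get b < L.get a := by
    intro a b hab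
    have h1 : L.get b ≤ L.get a := List.Pairwise.rel_get_of_lt hsorted hab
    have h2 : L.get a ≠ L.get b := fun h =>
      absurd ((List.Nodup.get_inj_iff hnodup).mp h) (Fin.ne_of_lt hab)
    exact lt_of_le_of_ne h1 (Ne.symm h2)
  have key : ∀ (Q : ℝ → Prop), ∀ _ : DecidablePred Q,
      #(univ.filter fun j => Q (s j)) = #(univ.filter fun m : Fin L.length => Q (L.get m)) := by
    intro Q _
    rw [← countP_ofFn' s Q, ← countP_ofFn' L.get Q, List.ofFn_get]
    exact (hperm.countP_eq _).symm
  have cardlt : ∀ u : ℕ, u ≤ n → #(univ.filter fun m : Fin L.length => (m:ℕ) < u) = u := by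
    intro u hu
    rw [Finset.card_filter]
    rw [Fin.sum_univ_eq_sum_range (fun j => if j < u then 1 else 0) L.length]
    rw [← Finset.card_filter]
    have : (Finset.range L.length).filter (fun j => j < u) = Finset.range u := by
      ext x; simp only [mem_filter, mem_range]; omega
    rw [this, card_range]
  refine ⟨?_, ?_, ?_⟩
  · have : kthLargest s t ∈ L := hT ▸ List.get_mem L ⟨t-1, hidx⟩
    exact List.mem_ofFn.mp (hperm.mem_iff.mp this)
  · rw [key _ inferInstance]
    have heq : (univ.filter fun m : Fin L.length => kthLargest s t < L.get m)
        = univ.filter fun m : Fin L.length => (m:ℕ) < t - 1 := by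
      apply Finset.filter_congr
      intro m _
      constructor
      · intro hlt
        by_contra hge
        push_neg at hge
        rcases eq_or_lt_of_le hge with he | hgt
        · rw [hT] at hlt
          have : (⟨t-1, hidx⟩ : Fin L.length) = m := by
            apply Fin.ext; simp [← he]
          rw [this] at hlt
          exact lt_irrefl _ hlt
        · have := hanti ⟨t-1, hidx⟩ m (by simp [Fin.lt_def]; omega)
          rw [← hT] at this
          exact absurd hlt (by linarith)
      · intro hm
        have := hanti m ⟨t-1, hidx⟩ (by simp [Fin.lt_def]; omega)
        rw [← hT] at this
        simpa using this
    rw [heq, cardlt (t-1) (by omega)]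
  · rw [key _ inferInstance]
    have hsub : (univ.filter fun m : Fin L.length => (m:ℕ) < t)
        ⊆ univ.filter fun m : Fin L.length => kthLargest s t ≤ L.get m := by
      intro m hm
      simp only [mem_filter, mem_univ, true_and] at hm ⊢
      rcases eq_or_lt_of_le (show (m:ℕ) ≤ t-1 by omega) with he | hlt
      · have : m = (⟨t-1, hidx⟩ : Fin L.length) := by apply Fin.ext; simp [he]
        rw [hT, this]
      · have := hanti m ⟨t-1, hidx⟩ (by simp [Fin.lt_def]; omega)
        rw [← hT] at this
        exact le_of_lt this
    calc t = #(univ.filter fun m : Fin L.length => (m:ℕ) < t) := (cardlt t htn).symm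
      _ ≤ _ := card_le_card hsub

section MainAux

open Finset

variable {n : ℕ}

def WVal (X : Fin n → ℝ × ℝ) (p : Fin n × Bool) : ℝ :=
  if p.2 then (X p.1).1 else (X p.1).2

lemma sampleVec_eq_W (X : Fin n → ℝ × ℝ) (c : Fin n → Bool) (i : Fin n) :
    sampleVec X c i = WVal X (i, c i) := rfl

lemma awardVec_eq_W (X : Fin n → ℝ × ℝ) (c : Fin n → Bool) (i : Fin n) :
    awardVec X c i = WVal X (i, !(c i)) := by
  cases hc : c i <;> simp [awardVec, WVal, hc]

lemma count_sv (X : Fin n → ℝ × ℝ) (c : Fin n → Bool) (Q : ℝ → Prop) [DecidablePred Q] :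
    #(univ.filter fun p : Fin n × Bool => Q (WVal X p))
      = #(univ.filter fun i => Q (sampleVec X c i))
        + #(univ.filter fun i => Q (awardVec X c i)) := by
  rw [card_filter_prod (fun p : Fin n × Bool => Q (WVal X p)), Finset.card_filter,
    Finset.card_filter, Finset.card_filter, Finset.card_filter,
    ← Finset.sum_add_distrib, ← Finset.sum_add_distrib]
  refine Finset.sum_congr rfl fun i _ => ?_
  cases hc : c i <;> simp [sampleVec, awardVec, WVal, hc, add_comm]

lemma cnt_award (X : Fin n → ℝ × ℝ) (c : Fin n → Bool) (Q : ℝ → Prop) [DecidablePred Q] :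
    #(univ.filter fun p : Fin n × Bool => Q (WVal X p) ∧ p.2 = !(c p.1))
      = #(univ.filter fun i => Q (awardVec X c i)) := by
  rw [card_filter_prod (fun p : Fin n × Bool => Q (WVal X p) ∧ p.2 = !(c p.1)),
    Finset.card_filter, Finset.card_filter, Finset.card_filter, ← Finset.sum_add_distrib]
  refine Finset.sum_congr rfl fun i _ => ?_
  cases hc : c i <;> simp [awardVec, WVal, hc]

lemma cnt_sample (X : Fin n → ℝ × ℝ) (c : Fin n → Bool) (Q : ℝ → Prop) [DecidablePred Q] :
    #(univ.filter fun p : Fin n × Bool => Q (WVal X p) ∧ p.2 = c p.1)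
      = #(univ.filter fun i => Q (sampleVec X c i)) := by
  rw [card_filter_prod (fun p : Fin n × Bool => Q (WVal X p) ∧ p.2 = c p.1),
    Finset.card_filter, Finset.card_filter, Finset.card_filter, ← Finset.sum_add_distrib]
  refine Finset.sum_congr rfl fun i _ => ?_
  cases hc : c i <;> simp [sampleVec, WVal, hc]

lemma sample_count_univ (c : Fin n → Bool) :
    #((univ : Finset (Fin n × Bool)).filter fun p => p.2 = c p.1) = n := by
  rw [card_filter_prod (fun p : Fin n × Bool => p.2 = c p.1), Finset.card_filter,
    Finset.card_filter, ← Finset.sum_add_distrib]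
  calc (∑ i : Fin n, ((if true = c i then 1 else 0) + if false = c i then 1 else 0))
      = ∑ _i : Fin n, 1 := by
        refine Finset.sum_congr rfl fun i _ => ?_
        cases hc : c i <;> simp [hc]
    _ = n := by simp

end MainAux

section Events

open Finset

lemma FA_bound {n ℓ τ k : ℕ} (hℓ : 1 ≤ ℓ) (hℓτ : ℓ ≤ τ) (hτk : τ ≤ k) (hτn : τ ≤ n)
    (X : Fin n → ℝ × ℝ) (hw : Function.Injective (WVal X)) :
    ∑ c : Fin n → Bool,
        (if #((univ.filter fun p => rnk (WVal X) p < τ + ℓ - 1).filter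
            fun p => p.2 = !(c p.1)) < ℓ then (1:ℝ) else 0)
      ≤ 2^n * Real.exp (-((min (k-τ) (τ-ℓ) : ℕ):ℝ)^2 / (8*(k:ℝ))) := by
  classical
  set P : Finset (Fin n × Bool) := univ.filter fun p => rnk (WVal X) p < τ + ℓ - 1 with hP
  have hcard2n : Fintype.card (Fin n × Bool) = 2 * n := by
    simp [Fintype.card_prod]; ring
  have hPcard : #P = τ + ℓ - 1 := by
    rw [hP, card_rnk_lt hw, hcard2n]; omega
  have hsplit := split_card P
  have hk1 : 1 ≤ k := le_trans (le_trans hℓ hℓτ) hτk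
  by_cases hqℓ : ℓ ≤ #(pairsBoth P)
  · have hz : ∀ c : Fin n → Bool,
        (if #(P.filter fun p => p.2 = !(c p.1)) < ℓ then (1:ℝ) else 0) = 0 := by
      intro c
      rw [if_neg]
      push_neg
      rw [split_award]
      omega
    rw [Finset.sum_congr rfl fun c _ => hz c, Finset.sum_const, smul_zero]
    positivity
  · push_neg at hqℓ
    set q := #(pairsBoth P) with hq
    set p1 := #(pairsOne P) with hp1
    set r := ℓ - 1 - q with hr
    have hiff : ∀ c : Fin n → Bool,
        (#(P.filter fun p => p.2 = !(c p.1)) < ℓ)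
          ↔ (#((pairsOne P).filter fun i => c i = gSide P i) ≤ r) := by
      intro c; rw [split_award]; omega
    have heq : ∀ c : Fin n → Bool,
        (if #(P.filter fun p => p.2 = !(c p.1)) < ℓ then (1:ℝ) else 0)
          = (if #((pairsOne P).filter fun i => c i = gSide P i) ≤ r then (1:ℝ) else 0) := by
      intro c
      by_cases h : #(P.filter fun p => p.2 = !(c p.1)) < ℓ
      · rw [if_pos h, if_pos ((hiff c).mp h)]
      · rw [if_neg h, if_neg (fun hh => h ((hiff c).mpr hh))]
    rw [Finset.sum_congr rfl fun c _ => heq c]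
    have h2r : 2 * r ≤ p1 := by omega
    refine le_trans (chernoff (pairsOne P) (gSide P) r h2r) ?_
    apply mul_le_mul_of_nonneg_left _ (by positivity)
    rw [Real.exp_le_exp]
    have hnat : p1 + ℓ = τ + 1 + 2*r := by omega
    have hp1pos : 1 ≤ p1 := by omega
    have hp1le : p1 ≤ 2*k := by omega
    have hd : ((p1:ℝ) - 2*r) = (τ:ℝ) - ℓ + 1 := by
      have : ((p1:ℕ):ℝ) + ℓ = ((τ:ℕ):ℝ) + 1 + 2*r := by exact_mod_cast hnat
      linarith
    have hm1 : ((min (k-τ) (τ-ℓ) : ℕ):ℝ) ≤ (τ:ℝ) - ℓ := by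
      have h1 : (min (k-τ) (τ-ℓ) : ℕ) ≤ τ - ℓ := min_le_right _ _
      have h2 : ((min (k-τ) (τ-ℓ) : ℕ):ℝ) ≤ ((τ - ℓ : ℕ):ℝ) := by exact_mod_cast h1
      rwa [Nat.cast_sub hℓτ] at h2
    have hm0 : (0:ℝ) ≤ ((min (k-τ) (τ-ℓ) : ℕ):ℝ) := Nat.cast_nonneg _
    rw [neg_div, neg_div, neg_le_neg_iff]
    have hsq : ((min (k-τ) (τ-ℓ) : ℕ):ℝ)^2 ≤ ((p1:ℝ) - 2*r)^2 := by
      rw [hd]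
      have : ((min (k-τ) (τ-ℓ) : ℕ):ℝ) ≤ (τ:ℝ) - ℓ + 1 := by linarith
      nlinarith
    have hden : (0:ℝ) < 2 * p1 := by
        have : (1:ℝ) ≤ p1 := by exact_mod_cast hp1pos
        linarith
    have hden2 : 2 * (p1:ℝ) ≤ 8 * k := by
      have : ((p1:ℕ):ℝ) ≤ 2*(k:ℝ) := by exact_mod_cast hp1le
      have hk0 : (0:ℝ) ≤ k := Nat.cast_nonneg _
      linarith
    calc ((min (k-τ) (τ-ℓ) : ℕ):ℝ)^2 / (8*(k:ℝ))
        ≤ ((min (k-τ) (τ-ℓ) : ℕ):ℝ)^2 / (2*(p1:ℝ)) := by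
          apply div_le_div_of_nonneg_left (by positivity) hden hden2
      _ ≤ ((p1:ℝ) - 2*r)^2 / (2*(p1:ℝ)) := by
          exact (div_le_div_iff_of_pos_right hden).mpr hsq

end Events

section Events2

open Finset

lemma FB_bound {n ℓ τ k : ℕ} (hℓ : 1 ≤ ℓ) (hℓτ : ℓ ≤ τ) (hτk : τ ≤ k) (hτn : τ ≤ n)
    (X : Fin n → ℝ × ℝ) (hw : Function.Injective (WVal X)) :
    ∑ c : Fin n → Bool,
        (if #((univ.filter fun p => rnk (WVal X) p < k + τ - 1).filter
            fun p => p.2 = c p.1) < τ then (1:ℝ) else 0)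
      ≤ 2^n * Real.exp (-((min (k-τ) (τ-ℓ) : ℕ):ℝ)^2 / (8*(k:ℝ))) := by
  classical
  set P : Finset (Fin n × Bool) := univ.filter fun p => rnk (WVal X) p < k + τ - 1 with hP
  have hcard2n : Fintype.card (Fin n × Bool) = 2 * n := by
    simp [Fintype.card_prod]; ring
  have hk1 : 1 ≤ k := le_trans (le_trans hℓ hℓτ) hτk
  by_cases h2n : 2*n < k + τ - 1
  · -- P = univ and the event is impossible
    have hPuniv : P = univ := by
      rw [hP]
      apply Finset.filter_true_of_mem
      intro p _
      have := rnk_lt_card (WVal X) p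
      omega
    have hz : ∀ c : Fin n → Bool,
        (if #(P.filter fun p => p.2 = c p.1) < τ then (1:ℝ) else 0) = 0 := by
      intro c
      rw [if_neg]
      rw [hPuniv, sample_count_univ c]
      omega
    rw [Finset.sum_congr rfl fun c _ => hz c, Finset.sum_const, smul_zero]
    positivity
  · push_neg at h2n
    have hPcard : #P = k + τ - 1 := by
      rw [hP, card_rnk_lt hw, hcard2n]; omega
    have hsplit := split_card P
    by_cases hqτ : τ ≤ #(pairsBoth P)
    · have hz : ∀ c : Fin n → Bool,
          (if #(P.filter fun p => p.2 = c p.1) < τ then (1:ℝ) else 0) = 0 := by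
        intro c
        rw [if_neg]
        push_neg
        rw [split_sample]
        omega
      rw [Finset.sum_congr rfl fun c _ => hz c, Finset.sum_const, smul_zero]
      positivity
    · push_neg at hqτ
      set q := #(pairsBoth P) with hq
      set p1 := #(pairsOne P) with hp1
      set r := τ - 1 - q with hr
      have hiff : ∀ c : Fin n → Bool,
          (#(P.filter fun p => p.2 = c p.1) < τ)
            ↔ (#((pairsOne P).filter fun i => c i = !(gSide P i)) ≤ r) := by
        intro c; rw [split_sample]; omega
      have heq : ∀ c : Fin n → Bool,
          (if #(P.filter fun p => p.2 = c p.1) < τ then (1:ℝ) else 0)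
            = (if #((pairsOne P).filter fun i => c i = !(gSide P i)) ≤ r then (1:ℝ) else 0) := by
        intro c
        by_cases h : #(P.filter fun p => p.2 = c p.1) < τ
        · rw [if_pos h, if_pos ((hiff c).mp h)]
        · rw [if_neg h, if_neg (fun hh => h ((hiff c).mpr hh))]
      rw [Finset.sum_congr rfl fun c _ => heq c]
      have h2r : 2 * r ≤ p1 := by omega
      refine le_trans (chernoff (pairsOne P) (fun i => !(gSide P i)) r h2r) ?_
      apply mul_le_mul_of_nonneg_left _ (by positivity)
      rw [Real.exp_le_exp]
      have hnat : p1 + τ = k + 1 + 2*r := by omega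
      have hp1pos : 1 ≤ p1 := by omega
      have hp1le : p1 ≤ 2*k := by omega
      have hd : ((p1:ℝ) - 2*r) = (k:ℝ) - τ + 1 := by
        have : ((p1:ℕ):ℝ) + τ = ((k:ℕ):ℝ) + 1 + 2*r := by exact_mod_cast hnat
        linarith
      have hm1 : ((min (k-τ) (τ-ℓ) : ℕ):ℝ) ≤ (k:ℝ) - τ := by
        have h1 : (min (k-τ) (τ-ℓ) : ℕ) ≤ k - τ := min_le_left _ _
        have h2 : ((min (k-τ) (τ-ℓ) : ℕ):ℝ) ≤ ((k - τ : ℕ):ℝ) := by exact_mod_cast h1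
        rwa [Nat.cast_sub hτk] at h2
      have hm0 : (0:ℝ) ≤ ((min (k-τ) (τ-ℓ) : ℕ):ℝ) := Nat.cast_nonneg _
      rw [neg_div, neg_div, neg_le_neg_iff]
      have hsq : ((min (k-τ) (τ-ℓ) : ℕ):ℝ)^2 ≤ ((p1:ℝ) - 2*r)^2 := by
        rw [hd]
        have : ((min (k-τ) (τ-ℓ) : ℕ):ℝ) ≤ (k:ℝ) - τ + 1 := by linarith
        nlinarith
      have hden : (0:ℝ) < 2 * p1 := by
        have : (1:ℝ) ≤ p1 := by exact_mod_cast hp1pos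
        linarith
      have hden2 : 2 * (p1:ℝ) ≤ 8 * k := by
        have : ((p1:ℕ):ℝ) ≤ 2*(k:ℝ) := by exact_mod_cast hp1le
        have hk0 : (0:ℝ) ≤ k := Nat.cast_nonneg _
        linarith
      calc ((min (k-τ) (τ-ℓ) : ℕ):ℝ)^2 / (8*(k:ℝ))
          ≤ ((min (k-τ) (τ-ℓ) : ℕ):ℝ)^2 / (2*(p1:ℝ)) := by
            apply div_le_div_of_nonneg_left (by positivity) hden hden2
        _ ≤ ((p1:ℝ) - 2*r)^2 / (2*(p1:ℝ)) := (div_le_div_iff_of_pos_right hden).mpr hsq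

end Events2

section GoodCase

open Finset

lemma good_case {n ℓ τ k : ℕ} (hℓ : 1 ≤ ℓ) (hℓτ : ℓ ≤ τ) (hτk : τ ≤ k) (hτn : τ ≤ n)
    (X : Fin n → ℝ × ℝ) (hw : Function.Injective (WVal X)) (hw0 : ∀ p, 0 ≤ WVal X p)
    (c : Fin n → Bool)
    (hFA : ¬ (#((univ.filter fun p => rnk (WVal X) p < τ + ℓ - 1).filter
        fun p => p.2 = !(c p.1)) < ℓ))
    (hFB : ¬ (#((univ.filter fun p => rnk (WVal X) p < k + τ - 1).filter
        fun p => p.2 = c p.1) < τ)) :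
    TOPval ℓ univ (awardVec X c)
      ≤ TOPval ℓ (acceptSet k (kthLargest (sampleVec X c) τ) (awardVec X c))
          (awardVec X c) := by
  classical
  have hk1 : 1 ≤ k := le_trans (le_trans hℓ hℓτ) hτk
  have hs_inj : Function.Injective (sampleVec X c) := by
    intro i j h
    have h2 : (i, c i) = (j, c j) := hw (by simpa [sampleVec_eq_W] using h)
    exact congrArg Prod.fst h2
  have hv_inj : Function.Injective (awardVec X c) := by
    intro i j h
    have h2 : (i, !(c i)) = (j, !(c j)) := hw (by simpa [awardVec_eq_W] using h)
    exact congrArg Prod.fst h2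
  have hv0 : ∀ i, 0 ≤ awardVec X c i := fun i => by
    rw [awardVec_eq_W]; exact hw0 _
  obtain ⟨⟨j0, hj0⟩, hgtT, hgeT⟩ :=
    kth_facts (sampleVec X c) hs_inj τ (le_trans hℓ hℓτ) hτn
  set T := kthLargest (sampleVec X c) τ with hTdef
  -- no overflow
  have hover : #(univ.filter fun j => T < awardVec X c j) < k := by
    by_contra hk
    push_neg at hk
    apply hFB
    have hdec := count_sv X c (fun x => T < x)
    have hupT : k + τ - 1 ≤ #(univ.filter fun p => T < WVal X p) := by
      rw [hdec, hgtT]; omega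
    have hsub2 : (univ.filter fun p => rnk (WVal X) p < k + τ - 1)
        ⊆ univ.filter fun p => T < WVal X p := by
      intro p hp
      simp only [mem_filter, mem_univ, true_and] at hp ⊢
      exact up_of_rnk_lt hupT hp
    calc #((univ.filter fun p => rnk (WVal X) p < k + τ - 1).filter fun p => p.2 = c p.1)
        ≤ #((univ.filter fun p => T < WVal X p).filter fun p => p.2 = c p.1) :=
          card_le_card (Finset.filter_subset_filter _ hsub2)
      _ = #(univ.filter fun j => T < sampleVec X c j) := by
          rw [Finset.filter_filter]
          exact cnt_sample X c (fun x => T < x)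
      _ = τ - 1 := hgtT
      _ < τ := by omega
  apply TOPval_le
  intro B hBu hBc
  refine le_trans (majorize hv_inj hv0 hBc) ?_
  have hzero : ∑ i ∈ univ.filter (fun i => rnk (awardVec X c) i < ℓ), awardVec X c i
      = ∑ i ∈ (univ.filter fun i => rnk (awardVec X c) i < ℓ).filter
          (fun i => 0 < awardVec X c i), awardVec X c i := by
    symm
    apply Finset.sum_subset (filter_subset _ _)
    intro x hx hxn
    simp only [mem_filter, hx, true_and] at hxn
    have h1 := hv0 x
    simp only [not_lt] at hxn
    linarith
  rw [hzero]
  have hcard : #((univ.filter fun i => rnk (awardVec X c) i < ℓ).filter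
      (fun i => 0 < awardVec X c i)) ≤ ℓ := by
    refine le_trans (card_le_card (filter_subset _ _)) ?_
    rw [card_rnk_lt hv_inj]
    exact min_le_left _ _
  apply le_TOPval _ hcard
  -- the positive top-ℓ awards are all accepted
  intro i hi
  simp only [mem_filter, mem_univ, true_and] at hi
  obtain ⟨hrk, hpos⟩ := hi
  have hne : awardVec X c i ≠ T := by
    intro he
    have h2 : (i, !(c i)) = (j0, c j0) := by
      apply hw
      rw [← sampleVec_eq_W, ← awardVec_eq_W, hj0, he]
    have hfst : i = j0 := congrArg Prod.fst h2
    have hsnd : (!(c i)) = c j0 := congrArg Prod.snd h2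
    rw [← hfst] at hsnd
    exact Bool.not_ne_self (c i) hsnd
  have hTlt : T < awardVec X c i := by
    rcases lt_or_gt_of_ne hne with hlt | hgt
    · exfalso
      apply hFA
      have hsge : τ ≤ #(univ.filter fun j => awardVec X c i < sampleVec X c j) := by
        refine le_trans hgeT (card_le_card ?_)
        intro j hj
        simp only [mem_filter, mem_univ, true_and] at hj ⊢
        linarith
      have htdec := count_sv X c (fun x => awardVec X c i < x)
      by_cases hU : τ + ℓ - 1 ≤ #(univ.filter fun p => awardVec X c i < WVal X p)
      · have hsubA : (univ.filter fun p => rnk (WVal X) p < τ + ℓ - 1)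
            ⊆ univ.filter fun p => awardVec X c i < WVal X p := by
          intro p hp
          simp only [mem_filter, mem_univ, true_and] at hp ⊢
          exact up_of_rnk_lt hU hp
        calc #((univ.filter fun p => rnk (WVal X) p < τ+ℓ-1).filter fun p => p.2 = !(c p.1))
            ≤ #((univ.filter fun p => awardVec X c i < WVal X p).filter
                fun p => p.2 = !(c p.1)) :=
              card_le_card (Finset.filter_subset_filter _ hsubA)
          _ = #(univ.filter fun j => awardVec X c i < awardVec X c j) := by
              rw [Finset.filter_filter]
              exact cnt_award X c (fun x => awardVec X c i < x)
          _ < ℓ := hrk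
      · push_neg at hU
        have hsubU : (univ.filter fun p => awardVec X c i < WVal X p)
            ⊆ univ.filter fun p => rnk (WVal X) p < τ + ℓ - 1 := by
          intro p hp
          simp only [mem_filter, mem_univ, true_and] at hp ⊢
          exact rnk_lt_of_up (le_of_lt hU) hp
        have hsubsplit :
            (univ.filter fun p => rnk (WVal X) p < τ+ℓ-1).filter (fun p => p.2 = !(c p.1))
              ⊆ ((univ.filter fun p => awardVec X c i < WVal X p).filter
                    fun p => p.2 = !(c p.1))
                ∪ ((univ.filter fun p => rnk (WVal X) p < τ+ℓ-1)
                    \ (univ.filter fun p => awardVec X c i < WVal X p)) := by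
          intro p hp
          rw [mem_union]
          rcases mem_filter.mp hp with ⟨hp1, hp2⟩
          by_cases hpu : p ∈ univ.filter fun p => awardVec X c i < WVal X p
          · exact Or.inl (mem_filter.mpr ⟨hpu, hp2⟩)
          · exact Or.inr (mem_sdiff.mpr ⟨hp1, hpu⟩)
        have hc1 : #((univ.filter fun p => rnk (WVal X) p < τ+ℓ-1).filter
              (fun p => p.2 = !(c p.1)))
            ≤ #((univ.filter fun p => awardVec X c i < WVal X p).filter
                  fun p => p.2 = !(c p.1))
              + #((univ.filter fun p => rnk (WVal X) p < τ+ℓ-1)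
                  \ (univ.filter fun p => awardVec X c i < WVal X p)) :=
          le_trans (card_le_card hsubsplit) (card_union_le _ _)
        have h1 : #((univ.filter fun p => awardVec X c i < WVal X p).filter
            fun p => p.2 = !(c p.1)) = #(univ.filter fun j => awardVec X c i < awardVec X c j) := by
          rw [Finset.filter_filter]
          exact cnt_award X c (fun x => awardVec X c i < x)
        have h2 : #((univ.filter fun p => rnk (WVal X) p < τ+ℓ-1)
              \ (univ.filter fun p => awardVec X c i < WVal X p))
            = #(univ.filter fun p : Fin n × Bool => rnk (WVal X) p < τ+ℓ-1)
              - #(univ.filter fun p => awardVec X c i < WVal X p) :=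
          card_sdiff_of_subset hsubU
        have h3 : #(univ.filter fun p : Fin n × Bool => rnk (WVal X) p < τ+ℓ-1) ≤ τ + ℓ - 1 :=
          le_trans (le_of_eq (card_rnk_lt hw _)) (min_le_left _ _)
        have hrk' : #(univ.filter fun j => awardVec X c i < awardVec X c j) < ℓ := hrk
        omega
    · exact hgt
  have hcnt : #(univ.filter fun j => j < i ∧ T < awardVec X c j) < k := by
    refine lt_of_le_of_lt (card_le_card ?_) hover
    intro j hj
    simp only [mem_filter, mem_univ, true_and] at hj ⊢
    exact hj.2
  rw [acceptSet, mem_filter]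
  exact ⟨mem_univ _, hTlt, hcnt⟩

end GoodCase

/-- **Key lemma for the single-sample ℓ-out-of-k prophet inequality.**
For pairs `X` of nonnegative reals with pairwise-distinct entries, when each pair is split
uniformly at random into a sample and an award, the algorithm `ALG^τ` (threshold = `τ`-th
largest sample, accept the first `k` awards above it) satisfies
`E_c[TOP_ℓ(S; v)] ≥ (1 − 4ℓ·e^{−(min(k−τ,τ−ℓ))²/(8k)}) · E_c[TOP_ℓ(v)]`. -/
theorem alg_tau_on_pair_distribution (n ℓ τ k : ℕ) (hℓ : 1 ≤ ℓ) (hℓτ : ℓ ≤ τ) (hτk : τ ≤ k)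
    (X : Fin n → ℝ × ℝ)
    (hnonneg : ∀ i, 0 ≤ (X i).1 ∧ 0 ≤ (X i).2)
    (hdistinct : Function.Injective
      (fun p : Fin n × Bool => if p.2 then (X p.1).1 else (X p.1).2)) :
    (1 - 4 * ℓ * Real.exp (-(((min (k - τ) (τ - ℓ) : ℕ) : ℝ) ^ 2) / (8 * k))) *
        (((2 : ℝ) ^ n)⁻¹ * ∑ c : Fin n → Bool, TOPval ℓ Finset.univ (awardVec X c)) ≤
      ((2 : ℝ) ^ n)⁻¹ * ∑ c : Fin n → Bool,
        TOPval ℓ (acceptSet k (kthLargest (sampleVec X c) τ) (awardVec X c))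
          (awardVec X c) := by
  classical
  have hw : Function.Injective (WVal X) := hdistinct
  have hw0 : ∀ p, 0 ≤ WVal X p := by
    intro p
    rw [WVal]
    cases hp : p.2 <;> simp only [if_true, if_false, Bool.false_eq_true] <;>
      first
        | exact (hnonneg p.1).1
        | exact (hnonneg p.1).2
  set ε : ℝ := Real.exp (-(((min (k - τ) (τ - ℓ) : ℕ) : ℝ) ^ 2) / (8 * k)) with hεdef
  have hε0 : 0 < ε := Real.exp_pos _
  have hℓ1 : (1:ℝ) ≤ (ℓ:ℝ) := by exact_mod_cast hℓ
  set A := ∑ c : Fin n → Bool, TOPval ℓ Finset.univ (awardVec X c) with hA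
  set Bv := ∑ c : Fin n → Bool,
      TOPval ℓ (acceptSet k (kthLargest (sampleVec X c) τ) (awardVec X c))
        (awardVec X c) with hBv
  have hA0 : 0 ≤ A := Finset.sum_nonneg fun c _ => TOPval_nonneg ℓ _ _
  have hcoef : 1 - 4*(ℓ:ℝ)*ε ≤ 1 := by nlinarith
  have hinv : (0:ℝ) ≤ ((2:ℝ)^n)⁻¹ := by positivity
  by_cases hn : n < τ
  · -- easy branch : the threshold is 0 and everything positive is accepted
    have hstep : ∀ c : Fin n → Bool, TOPval ℓ Finset.univ (awardVec X c)
        ≤ TOPval ℓ (acceptSet k (kthLargest (sampleVec X c) τ) (awardVec X c))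
            (awardVec X c) := by
      intro c
      have hT : kthLargest (sampleVec X c) τ = 0 := by
        rw [kthLargest]
        apply List.getD_eq_default
        rw [List.length_insertionSort, List.length_ofFn]
        omega
      rw [hT]
      apply TOPval_le
      intro B hBu hBc
      have hv0 : ∀ j, 0 ≤ awardVec X c j := fun j => by
        rw [awardVec_eq_W]; exact hw0 _
      have hzero : ∑ i ∈ B, awardVec X c i
          = ∑ i ∈ B.filter (fun i => 0 < awardVec X c i), awardVec X c i := by
        symm
        apply Finset.sum_subset (Finset.filter_subset _ _)
        intro x hx hxn
        simp only [Finset.mem_filter, hx, true_and, not_lt] at hxn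
        linarith [hv0 x]
      rw [hzero]
      apply le_TOPval _ (le_trans (Finset.card_le_card (Finset.filter_subset _ _)) hBc)
      intro i hi
      simp only [Finset.mem_filter] at hi
      rw [acceptSet, Finset.mem_filter]
      refine ⟨Finset.mem_univ _, hi.2, ?_⟩
      calc #(Finset.univ.filter fun j => j < i ∧ (0:ℝ) < awardVec X c j)
          ≤ #(Finset.univ : Finset (Fin n)) :=
            Finset.card_le_card (Finset.filter_subset _ _)
        _ = n := by rw [Finset.card_univ, Fintype.card_fin]
        _ < k := by omega
    have hmono : A ≤ Bv := Finset.sum_le_sum (fun c _ => hstep c)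
    calc (1 - 4*(ℓ:ℝ)*ε) * (((2:ℝ)^n)⁻¹ * A)
        ≤ 1 * (((2:ℝ)^n)⁻¹ * A) :=
          mul_le_mul_of_nonneg_right hcoef (mul_nonneg hinv hA0)
      _ = ((2:ℝ)^n)⁻¹ * A := one_mul _
      _ ≤ ((2:ℝ)^n)⁻¹ * Bv := mul_le_mul_of_nonneg_left hmono hinv
  · push_neg at hn
    have hn1 : 1 ≤ n := le_trans (le_trans hℓ hℓτ) hn
    set Y := ∑ p ∈ Finset.univ.filter (fun p => rnk (WVal X) p < ℓ), WVal X p with hYdef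
    have hY0 : 0 ≤ Y := Finset.sum_nonneg fun p _ => hw0 p
    have hTOPY : ∀ c : Fin n → Bool, TOPval ℓ Finset.univ (awardVec X c) ≤ Y := by
      intro c
      apply TOPval_le
      intro B hBu hBc
      have hinj : Function.Injective (fun i : Fin n => (i, !(c i))) :=
        fun a b h => congrArg Prod.fst h
      have hsum : ∑ p ∈ B.image (fun i => (i, !(c i))), WVal X p
          = ∑ i ∈ B, awardVec X c i := by
        rw [Finset.sum_image (fun x _ y _ h => hinj h)]
        exact Finset.sum_congr rfl fun i _ => (awardVec_eq_W X c i).symm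
      rw [← hsum, hYdef]
      apply majorize hw hw0
      rw [Finset.card_image_of_injective _ hinj]
      exact hBc
    have hGl : #(Finset.univ.filter (fun p : Fin n × Bool => rnk (WVal X) p < ℓ)) ≤ ℓ :=
      le_trans (le_of_eq (card_rnk_lt hw _)) (min_le_left _ _)
    have hEc : ∀ c : Fin n → Bool,
        ∑ p ∈ Finset.univ.filter (fun p : Fin n × Bool => rnk (WVal X) p < ℓ),
          (if p.2 = !(c p.1) then WVal X p else 0)
          ≤ TOPval ℓ Finset.univ (awardVec X c) := by
      intro c
      rw [← Finset.sum_filter]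
      set D := (Finset.univ.filter (fun p : Fin n × Bool => rnk (WVal X) p < ℓ)).filter
          (fun p => p.2 = !(c p.1)) with hD
      have hinjD : ∀ x ∈ D, ∀ y ∈ D, x.1 = y.1 → x = y := by
        intro x hx y hy hxy
        have hx2 := (Finset.mem_filter.mp hx).2
        have hy2 := (Finset.mem_filter.mp hy).2
        exact Prod.ext hxy (by rw [hx2, hy2, hxy])
      have himg : ∑ i ∈ D.image Prod.fst, awardVec X c i = ∑ p ∈ D, WVal X p := by
        rw [Finset.sum_image hinjD]
        refine Finset.sum_congr rfl fun p hp => ?_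
        have hp2 := (Finset.mem_filter.mp hp).2
        rw [awardVec_eq_W, ← hp2]
      rw [← himg]
      apply le_TOPval (Finset.subset_univ _)
      calc #(D.image Prod.fst) ≤ #D := Finset.card_image_le
        _ ≤ _ := Finset.card_le_card (Finset.filter_subset _ _)
        _ ≤ ℓ := hGl
    have hswap : ∑ c : Fin n → Bool,
        ∑ p ∈ Finset.univ.filter (fun p : Fin n × Bool => rnk (WVal X) p < ℓ),
          (if p.2 = !(c p.1) then WVal X p else 0) = 2^(n-1) * Y := by
      rw [Finset.sum_comm, hYdef, Finset.mul_sum]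
      refine Finset.sum_congr rfl fun p _ => ?_
      have hcc : ∀ c : Fin n → Bool, (if p.2 = !(c p.1) then WVal X p else 0)
          = WVal X p * (if c p.1 = !(p.2) then 1 else 0) := by
        intro c
        by_cases h : p.2 = !(c p.1)
        · rw [if_pos h, if_pos (by rw [h, Bool.not_not]), mul_one]
        · rw [if_neg h, if_neg (fun hh => h (by rw [hh, Bool.not_not])), mul_zero]
      rw [Finset.sum_congr rfl fun c _ => hcc c, ← Finset.mul_sum, count_coord p.1 (!p.2)]
      ring
    have hEY : 2^(n-1) * Y ≤ A := by
      rw [← hswap, hA]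
      exact Finset.sum_le_sum fun c _ => hEc c
    have hkey : ∀ c : Fin n → Bool,
        TOPval ℓ Finset.univ (awardVec X c)
          - TOPval ℓ (acceptSet k (kthLargest (sampleVec X c) τ) (awardVec X c))
              (awardVec X c)
        ≤ ((if #((Finset.univ.filter fun p => rnk (WVal X) p < τ + ℓ - 1).filter
              fun p => p.2 = !(c p.1)) < ℓ then (1:ℝ) else 0)
          + (if #((Finset.univ.filter fun p => rnk (WVal X) p < k + τ - 1).filter
              fun p => p.2 = c p.1) < τ then (1:ℝ) else 0)) * Y := by
      intro c
      have hS0 : 0 ≤ TOPval ℓ (acceptSet k (kthLargest (sampleVec X c) τ) (awardVec X c))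
          (awardVec X c) := TOPval_nonneg _ _ _
      by_cases hFA : #((Finset.univ.filter fun p => rnk (WVal X) p < τ + ℓ - 1).filter
          fun p => p.2 = !(c p.1)) < ℓ
      · rw [if_pos hFA]
        have h1 := hTOPY c
        have h3 : (0:ℝ) ≤ (if #((Finset.univ.filter fun p => rnk (WVal X) p < k + τ - 1).filter
            fun p => p.2 = c p.1) < τ then (1:ℝ) else 0) := by positivity
        nlinarith
      · by_cases hFB : #((Finset.univ.filter fun p => rnk (WVal X) p < k + τ - 1).filter
            fun p => p.2 = c p.1) < τ
        · rw [if_neg hFA, if_pos hFB]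
          have h1 := hTOPY c
          nlinarith
        · rw [if_neg hFA, if_neg hFB]
          have hgood := good_case hℓ hℓτ hτk hn X hw hw0 c hFA hFB
          have : ((0:ℝ) + 0) * Y = 0 := by ring
          linarith
    have hABsum : A - Bv ≤ (2^n * ε + 2^n * ε) * Y := by
      have h1 : A - Bv = ∑ c : Fin n → Bool,
          (TOPval ℓ Finset.univ (awardVec X c)
            - TOPval ℓ (acceptSet k (kthLargest (sampleVec X c) τ) (awardVec X c))
                (awardVec X c)) := by
        rw [Finset.sum_sub_distrib]
      rw [h1]
      refine le_trans (Finset.sum_le_sum fun c _ => hkey c) ?_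
      rw [← Finset.sum_mul, Finset.sum_add_distrib]
      apply mul_le_mul_of_nonneg_right _ hY0
      exact add_le_add (FA_bound hℓ hℓτ hτk hn X hw) (FB_bound hℓ hℓτ hτk hn X hw)
    have h2n : (2:ℝ)^n = 2 * 2^(n-1) := by
      rw [← pow_succ']
      congr 1
      omega
    have hstep : A - Bv ≤ 4*(ℓ:ℝ)*ε*A := by
      have e1 : ((2:ℝ)^n * ε + 2^n * ε) * Y = 4*ε*(2^(n-1)*Y) := by rw [h2n]; ring
      have e2 : 4*ε*(2^(n-1)*Y) ≤ 4*ε*A :=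
        mul_le_mul_of_nonneg_left hEY (by positivity)
      have e3 : 4*ε*A ≤ 4*(ℓ:ℝ)*ε*A := by nlinarith [mul_nonneg (mul_nonneg (sub_nonneg.mpr hℓ1) hε0.le) hA0]
      linarith
    have hgoal : (1 - 4*(ℓ:ℝ)*ε) * A ≤ Bv := by nlinarith [hstep]
    calc (1 - 4*(ℓ:ℝ)*ε) * (((2:ℝ)^n)⁻¹ * A) = ((2:ℝ)^n)⁻¹ * ((1-4*(ℓ:ℝ)*ε)*A) := by ring
      _ ≤ ((2:ℝ)^n)⁻¹ * Bv := mul_le_mul_of_nonneg_left hgoal hinv
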